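/- Let N be a reticulation-visible network. Then for every reticulation node r of N, the unique child of r and all of the parents of r are tree nodes of N (Reticulation separability). -/

import Mathlib

/-!
Framework for rooted phylogenetic networks, formalized as directed graphs
given by an adjacency relation `A : V → V → Prop` on a vertex type `V`,
with a distinguished root `ρ`.  Leaves are identified with their (unique)
labels, i.e. the labelling is the identity on leaf vertices.
-/

namespace PhyloNet

variable {V : Type} {W : Type}

/-- Indegree of a vertex. -/
noncomputable def inDeg (A : V → V → Prop) (v : V) : ℕ := {u | A u v}.ncard

/-- Outdegree of a vertex. -/
noncomputable def outDeg (A : V → V → Prop) (v : V) : ℕ := {w | A v w}.ncard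

/-- `p` is a directed path (walk) from `u` to `v`, given as the list of its vertices. -/
def IsPath (A : V → V → Prop) (u v : V) (p : List V) : Prop :=
  p.Chain' A ∧ p.head? = some u ∧ p.getLast? = some v

/-- `A` with root `ρ` is a phylogenetic network: a finite rooted acyclic digraph whose
root has indegree 0 and outdegree ≥ 2, from which every node is reachable, and in which
every non-root node is either a leaf (indegree 1, outdegree 0), an internal tree node
(indegree 1, outdegree ≥ 2) or a reticulation (indegree ≥ 2, outdegree 1). -/
structure IsNetwork (A : V → V → Prop) (ρ : V) : Prop where
  finite : Finite V
  acyclic : ∀ v, ¬ Relation.TransGen A v v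
  root_indeg : inDeg A ρ = 0
  root_outdeg : 2 ≤ outDeg A ρ
  reach_from_root : ∀ v, Relation.ReflTransGen A ρ v
  degree_cond : ∀ v, v ≠ ρ →
    (inDeg A v = 1 ∧ (outDeg A v = 0 ∨ 2 ≤ outDeg A v)) ∨ (2 ≤ inDeg A v ∧ outDeg A v = 1)

/-- Reticulation node: indegree ≥ 2 and outdegree 1. -/
def IsRet (A : V → V → Prop) (v : V) : Prop := 2 ≤ inDeg A v ∧ outDeg A v = 1

/-- Leaf: indegree 1 and outdegree 0. -/
def IsLeaf (A : V → V → Prop) (v : V) : Prop := inDeg A v = 1 ∧ outDeg A v = 0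

/-- Tree node: any node that is not a reticulation node. -/
def IsTreeNode (A : V → V → Prop) (v : V) : Prop := ¬ IsRet A v

/-- `u` is visible on `v`: every directed path from the root `ρ` to `v` contains `u`. -/
def Visible (A : V → V → Prop) (ρ u v : V) : Prop := ∀ p, IsPath A ρ v p → u ∈ p

/-- A network is reticulation-visible if every reticulation node is visible on some leaf. -/
def RetVisible (A : V → V → Prop) (ρ : V) : Prop :=
  ∀ r, IsRet A r → ∃ ℓ, IsLeaf A ℓ ∧ Visible A ρ r ℓ

/-- Undirected adjacency in the subgraph `N − R(N)` induced on tree nodes. -/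
def TAdj (A : V → V → Prop) (u v : V) : Prop :=
  IsTreeNode A u ∧ IsTreeNode A v ∧ (A u v ∨ A v u)

/-- `S` is a tree node component: a connected component (ignoring directions) of the
subgraph induced on the tree nodes. -/
def IsTNC (A : V → V → Prop) (S : Set V) : Prop :=
  ∃ u, IsTreeNode A u ∧ S = {v | Relation.ReflTransGen (TAdj A) u v}

/-- `r` is the root of the tree node component `S`: it lies in `S` and has indegree 0
within `N − R(N)`, i.e. it has no tree-node parent. -/
def CompRoot (A : V → V → Prop) (S : Set V) (r : V) : Prop :=
  r ∈ S ∧ ∀ u, IsTreeNode A u → ¬ A u r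

/-- Tree node component `C'` is below tree node component `C''`. -/
def Below (A : V → V → Prop) (C' C'' : Set V) : Prop :=
  ∃ r, IsRet A r ∧ (∃ c, A r c ∧ CompRoot A C' c) ∧ (∃ p ∈ C'', A p r)

/-- A big tree node component: a tree node component with at least two nodes. -/
def BigTNC (A : V → V → Prop) (C : Set V) : Prop :=
  IsTNC A C ∧ ∃ a ∈ C, ∃ b ∈ C, a ≠ b

/-- A single-leaf component: its node set is `{ℓ}` for some leaf `ℓ`. -/
def SingleLeafTNC (A : V → V → Prop) (C : Set V) : Prop :=
  ∃ ℓ, IsLeaf A ℓ ∧ C = {ℓ}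

/-- A lowest big tree node component: a big tree node component `C` such that every
tree node component whose root is a proper descendant of the root of `C` is a
single-leaf component. -/
def LowestBig (A : V → V → Prop) (C : Set V) : Prop :=
  BigTNC A C ∧ ∀ C' r' rC, IsTNC A C' → CompRoot A C' r' → CompRoot A C rC →
    Relation.TransGen A rC r' → SingleLeafTNC A C'

/-- An inner reticulation: all of its parents lie in one and the same tree node component. -/
def InnerRet (A : V → V → Prop) (r : V) : Prop :=
  IsRet A r ∧ ∃ S, IsTNC A S ∧ ∀ p, A p r → p ∈ S

/-- `IR(C)`: reticulations all of whose parents lie in `C`. -/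
def IRset (A : V → V → Prop) (C : Set V) : Set V :=
  {r | IsRet A r ∧ ∀ p, A p r → p ∈ C}

/-- `CR(C)`: reticulations with at least one parent in `C` and at least one parent outside `C`. -/
def CRset (A : V → V → Prop) (C : Set V) : Set V :=
  {r | IsRet A r ∧ (∃ p, A p r ∧ p ∈ C) ∧ (∃ p, A p r ∧ p ∉ C)}

/-- `L_C`: the leaves of the network lying in `C` together with the children of the
inner reticulations below `C`. -/
def LCset (A : V → V → Prop) (C : Set V) : Set V :=
  {ℓ | ℓ ∈ C ∧ IsLeaf A ℓ} ∪ {x | ∃ r ∈ IRset A C, A r x}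

/-- Bicombining: every reticulation node has indegree exactly 2. -/
def Bicombining (A : V → V → Prop) : Prop := ∀ r, IsRet A r → inDeg A r = 2

/-- Galled: every reticulation node `r` has an ancestor `u` admitting two
internal-node-disjoint directed paths from `u` to `r` in which every node other
than `r` is a tree node. -/
def Galled (A : V → V → Prop) : Prop :=
  ∀ r, IsRet A r → ∃ u, Relation.TransGen A u r ∧ ∃ p₁ p₂ : List V,
    IsPath A u r p₁ ∧ IsPath A u r p₂ ∧ p₁ ≠ p₂ ∧
    (∀ x, x ∈ p₁ → x ∈ p₂ → x = u ∨ x = r) ∧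
    (∀ x ∈ p₁, x ≠ r → IsTreeNode A x) ∧ (∀ x ∈ p₂, x ≠ r → IsTreeNode A x)

/-- Restriction of a digraph to a vertex subset. -/
def Restrict (A : V → V → Prop) (S : Set V) : V → V → Prop :=
  fun a b => a ∈ S ∧ b ∈ S ∧ A a b

/-- Descendants of `u` (including `u`); the vertex set of the subnetwork `D_N(u)`. -/
def Desc (A : V → V → Prop) (u : V) : Set V := {v | Relation.ReflTransGen A u v}

/-- Binary network: the root has outdegree 2, leaves have degree 1, and every other
node has total degree 3. -/
def IsBinary (A : V → V → Prop) (ρ : V) : Prop :=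
  outDeg A ρ = 2 ∧ ∀ v, v ≠ ρ →
    (inDeg A v = 1 ∧ outDeg A v = 0) ∨ (inDeg A v = 1 ∧ outDeg A v = 2) ∨
    (inDeg A v = 2 ∧ outDeg A v = 1)

/-- A phylogenetic tree: a network with no reticulation nodes. -/
def IsPhyloTree (A : W → W → Prop) (ρ : W) : Prop :=
  IsNetwork A ρ ∧ ∀ w, ¬ IsRet A w

/-- A node with indegree 1 and outdegree 1 (a suppressible node). -/
def Deg11 (A : V → V → Prop) (v : V) : Prop := inDeg A v = 1 ∧ outDeg A v = 1

/-- There is a directed path from `a` to `b` (of length ≥ 1) all of whose internal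
nodes are suppressible. -/
def SubdivPath (A : V → V → Prop) (a b : V) : Prop :=
  ∃ p : List V, IsPath A a b p ∧ 2 ≤ p.length ∧ ∀ z ∈ p, z ≠ a → z ≠ b → Deg11 A z

/-- `φ` witnesses that the digraph `A'` on the vertex set `S` is a subdivision of the
tree `AT` restricted to the vertex set `SW`: `φ` injectively maps the tree nodes onto
the non-suppressible nodes, edges of the tree correspond exactly to directed paths
whose internal nodes are suppressible, and leaves are mapped according to the leaf
correspondence `θ` (same labels). -/
def SubdivWitness (A' : V → V → Prop) (S : Set V) (AT : W → W → Prop) (SW : Set W)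
    (θ : W → V) (φ : W → V) : Prop :=
  Set.InjOn φ SW ∧ (∀ w ∈ SW, φ w ∈ S) ∧
  (∀ x ∈ S, ¬ Deg11 (Restrict A' S) x → ∃ w ∈ SW, φ w = x) ∧
  (∀ x ∈ SW, ∀ y ∈ SW, (Restrict AT SW x y ↔ SubdivPath (Restrict A' S) (φ x) (φ y))) ∧
  (∀ w ∈ SW, outDeg (Restrict AT SW) w = 0 → φ w = θ w)

/-- The digraph `A'` on vertex set `S` is a subdivision of the tree `AT` on `SW`. -/
def IsSubdivisionOf (A' : V → V → Prop) (S : Set V) (AT : W → W → Prop) (SW : Set W)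
    (θ : W → V) : Prop :=
  ∃ φ, SubdivWitness A' S AT SW θ φ

/-- `E`, `D`, `φ` witness that the subnetwork of `A` on vertex set `S` displays the
subtree of `AT` on vertex set `SW`: `E` is a set of reticulation edges of the
subnetwork containing all but one of the incoming edges of each reticulation node of
the subnetwork, `D` is a set of deleted nodes, and `φ` witnesses that the result is a
subdivision of the subtree. -/
def DisplayWitness (A : V → V → Prop) (S : Set V) (AT : W → W → Prop) (SW : Set W)
    (θ : W → V) (E : Set (V × V)) (D : Set V) (φ : W → V) : Prop :=
  (∀ e ∈ E, Restrict A S e.1 e.2 ∧ 2 ≤ inDeg (Restrict A S) e.2) ∧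
  (∀ r ∈ S, 2 ≤ inDeg (Restrict A S) r →
     ∃ p, Restrict A S p r ∧ (p, r) ∉ E ∧ ∀ q, Restrict A S q r → q ≠ p → (q, r) ∈ E) ∧
  SubdivWitness (fun a b => Restrict A S a b ∧ (a, b) ∉ E) (S \ D) AT SW θ φ

/-- The subnetwork of `A` on vertex set `S` displays the subtree of `AT` on `SW`. -/
def DisplaysOn (A : V → V → Prop) (S : Set V) (AT : W → W → Prop) (SW : Set W)
    (θ : W → V) : Prop :=
  ∃ E D φ, DisplayWitness A S AT SW θ E D φ

/-- The leaves of the subnetwork of `A` induced on vertex set `S`. -/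
def SubLeaves (A : V → V → Prop) (S : Set V) : Set V :=
  {v | v ∈ S ∧ outDeg (Restrict A S) v = 0}

/-- `B` is a soft cluster in the subnetwork of `A` on vertex set `S`: `B` is the
cluster of some node of some phylogenetic tree displayed by that subnetwork. -/
def SoftClusterOn (A : V → V → Prop) (S : Set V) (B : Set V) : Prop :=
  ∃ (W : Type) (AT : W → W → Prop) (ρT : W) (θ : W → V),
    IsPhyloTree AT ρT ∧
    Set.BijOn θ {w | IsLeaf AT w} (SubLeaves A S) ∧
    DisplaysOn A S AT Set.univ θ ∧
    ∃ x : W, θ '' {w | IsLeaf AT w ∧ Relation.ReflTransGen AT x w} = B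

/-- `B` is a soft cluster of the node `u` of `N`: there are `E` and `D` as in the
definition of display such that `u` is a node of `(N − E) − D` and the set of leaves
of `N` below `u` in `(N − E) − D` equals `B`. -/
def SoftClusterAt (A : V → V → Prop) (u : V) (B : Set V) : Prop :=
  ∃ (E : Set (V × V)) (D : Set V),
    (∀ e ∈ E, A e.1 e.2 ∧ 2 ≤ inDeg A e.2) ∧
    (∀ r, 2 ≤ inDeg A r → ∃ p, A p r ∧ (p, r) ∉ E ∧ ∀ q, A q r → q ≠ p → (q, r) ∈ E) ∧
    (∃ (W : Type) (AT : W → W → Prop) (ρT : W) (θ : W → V),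
      IsPhyloTree AT ρT ∧ Set.BijOn θ {w | IsLeaf AT w} {v | IsLeaf A v} ∧
      IsSubdivisionOf (fun a b => A a b ∧ (a, b) ∉ E) (Set.univ \ D) AT Set.univ θ) ∧
    u ∉ D ∧
    {ℓ | IsLeaf A ℓ ∧
      Relation.ReflTransGen (fun a b => A a b ∧ (a, b) ∉ E ∧ a ∉ D ∧ b ∉ D) u ℓ} = B

/-- `w` is the lowest common ancestor of the set `X` in the (tree-like) digraph `A`. -/
def IsLCAIn (A : V → V → Prop) (X : Set V) (w : V) : Prop :=
  (∀ x ∈ X, Relation.ReflTransGen A w x) ∧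
  ∀ w', (∀ x ∈ X, Relation.ReflTransGen A w' x) → Relation.ReflTransGen A w' w

end PhyloNet

namespace PhyloNet

private lemma chain'_mem_rtg {V : Type} (A : V → V → Prop) :
    ∀ (p : List V), p.Chain' A →
    ∀ x ∈ p, ∀ u v, p.head? = some u → p.getLast? = some v →
      Relation.ReflTransGen A u x ∧ Relation.ReflTransGen A x v := by
  intro p
  induction p with
  | nil => simp
  | cons a l ih =>
    intro hc x hx u v hu hv
    have hua : u = a := by simpa using hu.symm
    subst hua
    cases l with
    | nil =>
      have hxa : x = u := by simpa using hx
      have hva : v = u := by simpa using hv.symm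
      subst hxa; subst hva
      exact ⟨Relation.ReflTransGen.refl, Relation.ReflTransGen.refl⟩
    | cons b t =>
      have hab : A u b ∧ (b :: t).Chain' A := by
        rw [List.Chain', List.isChain_cons_cons] at hc; exact hc
      have hv' : (b :: t).getLast? = some v := by
        rwa [List.getLast?_cons_cons] at hv
      rcases List.mem_cons.mp hx with hxa | hxl
      · subst hxa
        have hb := ih hab.2 b List.mem_cons_self b v rfl hv'
        exact ⟨Relation.ReflTransGen.refl, Relation.ReflTransGen.head hab.1 hb.2⟩
      · have h := ih hab.2 x hxl b v rfl hv'
        exact ⟨Relation.ReflTransGen.head hab.1 h.1, h.2⟩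

private lemma mem_path_rtg {V : Type} {A : V → V → Prop} {u v x : V} {p : List V}
    (h : IsPath A u v p) (hx : x ∈ p) :
    Relation.ReflTransGen A u x ∧ Relation.ReflTransGen A x v :=
  chain'_mem_rtg A p h.1 x hx u v h.2.1 h.2.2

private lemma rtg_path {V : Type} {A : V → V → Prop} {u v : V}
    (h : Relation.ReflTransGen A u v) : ∃ p, IsPath A u v p := by
  induction h using Relation.ReflTransGen.head_induction_on with
  | refl => exact ⟨[v], by simp [IsPath, List.Chain', List.isChain_singleton]⟩
  | head hac _ ih =>
    obtain ⟨p, hc, hh, hl⟩ := ih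
    refine ⟨_ :: p, ?_, rfl, ?_⟩
    · exact List.isChain_cons.mpr ⟨fun y hy => by rw [hh] at hy; cases hy; exact hac, hc⟩
    · cases p with
      | nil => simp at hh
      | cons b t => rwa [List.getLast?_cons_cons]

private lemma path_cons {V : Type} {A : V → V → Prop} {m v a : V} {p : List V}
    (h : IsPath A m v p) (ha : A a m) : IsPath A a v (a :: p) := by
  obtain ⟨hc, hh, hl⟩ := h
  refine ⟨List.isChain_cons.mpr ⟨fun y hy => by rw [hh] at hy; cases hy; exact ha, hc⟩,
    rfl, ?_⟩
  cases p with
  | nil => simp at hh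
  | cons b t => rwa [List.getLast?_cons_cons]

private lemma path_append {V : Type} {A : V → V → Prop} {u m v : V} {p q : List V}
    (hp : IsPath A u m p) (hq : IsPath A m v q) : IsPath A u v (p ++ q.tail) := by
  obtain ⟨hc, hh, hl⟩ := hp
  obtain ⟨hc', hh', hl'⟩ := hq
  cases q with
  | nil => simp at hh'
  | cons m' t =>
    have hm : m' = m := by simpa using hh'
    subst hm
    cases t with
    | nil =>
      have hv : m' = v := by simpa using hl'
      subst hv
      exact ⟨by simpa using hc, by simpa using hh, by simpa using hl⟩
    | cons b t' =>
      have hab : A m' b ∧ (b :: t').Chain' A := by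
        rw [List.Chain', List.isChain_cons_cons] at hc'; exact hc'
      have hpne : p ≠ [] := by
        intro h0; rw [h0] at hh; simp at hh
      refine ⟨?_, ?_, ?_⟩
      · refine hc.append hab.2 ?_
        intro x hx y hy
        rw [hl] at hx; cases hx
        have hyb : b = y := by simpa using hy
        rw [← hyb]; exact hab.1
      · show (p ++ b :: t').head? = some u
        cases p with
        | nil => exact absurd rfl hpne
        | cons a l => simpa using hh
      · show (p ++ b :: t').getLast? = some v
        rw [List.getLast?_append]
        rw [List.getLast?_cons_cons] at hl'
        simp [hl']

private lemma out_unique {V : Type} {A : V → V → Prop} {u v w : V}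
    (h : outDeg A u = 1) (hv : A u v) (hw : A u w) : w = v := by
  obtain ⟨a, ha⟩ := Set.ncard_eq_one.mp h
  have h1 : v ∈ {w | A u w} := hv
  have h2 : w ∈ {w | A u w} := hw
  rw [ha] at h1 h2
  rw [Set.mem_singleton_iff] at h1 h2
  rw [h1, h2]

private lemma second_parent {V : Type} [Finite V] {A : V → V → Prop} {v p : V}
    (h : 2 ≤ inDeg A v) (_hp : A p v) : ∃ q, A q v ∧ q ≠ p := by
  have h1 : 1 < ({u | A u v} : Set V).ncard := h
  obtain ⟨a, b, ha, hb, hab⟩ := (Set.one_lt_ncard_iff (Set.toFinite _)).mp h1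
  by_cases hap : a = p
  · exact ⟨b, hb, by rw [← hap]; exact fun hbp => hab hbp.symm⟩
  · exact ⟨a, ha, hap⟩

/-- Key lemma: a node `u` of outdegree 1 whose unique child `v` is a reticulation
(indegree ≥ 2) cannot be visible on any node of outdegree 0. -/
private lemma no_visible {V : Type} {A : V → V → Prop} {ρ u v ℓ : V}
    (hN : IsNetwork A ρ) (hu : outDeg A u = 1) (huv : A u v) (hv : 2 ≤ inDeg A v)
    (hℓ : outDeg A ℓ = 0) (hvis : Visible A ρ u ℓ) : False := by
  have hfin : Finite V := hN.finite
  have hacy := hN.acyclic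
  have huℓ : u ≠ ℓ := fun h => by rw [h, hℓ] at hu; simp at hu
  -- every outgoing step from u goes to v
  -- get a path from ρ to ℓ; it contains u, hence v, hence ℓ is below v
  obtain ⟨P0, hP0⟩ := rtg_path (hN.reach_from_root ℓ)
  have huP0 : u ∈ P0 := hvis P0 hP0
  have huℓ' : Relation.ReflTransGen A u ℓ := (mem_path_rtg hP0 huP0).2
  have hvℓ : Relation.ReflTransGen A v ℓ := by
    rcases huℓ'.cases_head with h | ⟨c, hc, hcl⟩
    · exact absurd h huℓ
    · rwa [out_unique hu huv hc] at hcl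
  -- a second parent q of v, q ≠ u
  obtain ⟨q, hqv, hqu⟩ := second_parent hv huv
  -- build a path ρ → q → v → ℓ
  obtain ⟨P1, hP1⟩ := rtg_path (hN.reach_from_root q)
  obtain ⟨P2, hP2⟩ := rtg_path hvℓ
  have hQ2 : IsPath A q ℓ (q :: P2) := path_cons hP2 hqv
  have hQ : IsPath A ρ ℓ (P1 ++ P2) := path_append hP1 hQ2
  have huQ : u ∈ P1 ++ P2 := hvis _ hQ
  rcases List.mem_append.mp huQ with h1 | h2
  · -- u is an ancestor of q, so v is, so v → ... → q → v is a cycle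
    have huq : Relation.ReflTransGen A u q := (mem_path_rtg hP1 h1).2
    rcases huq.cases_head with h | ⟨c, hc, hcq⟩
    · exact hqu h.symm
    · rw [out_unique hu huv hc] at hcq
      exact hacy v (Relation.TransGen.tail' hcq hqv)
  · -- u is below v, so v → ... → u → v is a cycle
    have hvu : Relation.ReflTransGen A v u := (mem_path_rtg hP2 h2).1
    exact hacy v (Relation.TransGen.tail' hvu huv)

/-- **Reticulation separability.**
In a reticulation-visible network, the unique child and all the parents of every
reticulation node are tree nodes. -/
theorem reticulation_separability {V : Type} (A : V → V → Prop) (ρ : V)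
    (hN : IsNetwork A ρ) (hRV : RetVisible A ρ)
    (r : V) (hr : IsRet A r) :
    (∀ c, A r c → IsTreeNode A c) ∧ (∀ p, A p r → IsTreeNode A p) := by
  constructor
  · intro c hc hcret
    obtain ⟨ℓ, hℓ, hvis⟩ := hRV r hr
    exact no_visible hN hr.2 hc hcret.1 hℓ.2 hvis
  · intro p hp hpret
    obtain ⟨ℓ, hℓ, hvis⟩ := hRV p hpret
    exact no_visible hN hpret.2 hp hr.1 hℓ.2 hvis

end PhyloNet
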